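/- Almost-sure summability of score approximation errors (Lemma A.7 of the paper, first claim, φ-component): In the TMA(1) setup, define ε_t(θ), its truncation ε̃_t(θ) = σ^{-1}( X_t + Σ_{j=1}^{t−1} ( ∏_{i=1}^{j} A_{t−i}(θ) ) X_{t−j} ), the derivative series D_t(θ) = -σ^{-1} Σ_{j=1}^∞ Σ_{k=1}^{j} ( ∏_{i=1, i≠k}^{j} A_{t−i}(θ) ) X_{t−j}, and its truncation D̃_t(θ) (the same double sum restricted to j ≤ t−1). Then almost surely Σ_{t=1}^∞ sup_{θ∈Θ} | ε_t(θ) D_t(θ) − ε̃_t(θ) D̃_t(θ) | < ∞; equivalently, the differences of the φ-scores of the exact and approximated Gaussian quasi-log-likelihoods are almost surely summable over t. -/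

import Mathlib

open MeasureTheory ProbabilityTheory

/-- TMA(1) parameter space `Θ = {(φ, ξ, σ²) : |φ| ≤ c₁, |φ+ξ| ≤ c₁, c₂ ≤ σ² ≤ c₃}`. -/
def tmaTheta (c₁ c₂ c₃ : ℝ) : Set (ℝ × ℝ × ℝ) :=
  {θ | |θ.1| ≤ c₁ ∧ |θ.1 + θ.2.1| ≤ c₁ ∧ c₂ ≤ θ.2.2 ∧ θ.2.2 ≤ c₃}

/-- Inversion coefficient `A_t(θ) = -(φ + ξ·1{X_t ≤ u})`. -/
noncomputable def tmaA {Ω : Type*} (X : ℤ → Ω → ℝ) (u : ℝ) (θ : ℝ × ℝ × ℝ)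
    (t : ℤ) (ω : Ω) : ℝ :=
  -(θ.1 + θ.2.1 * (if X t ω ≤ u then 1 else 0))

/-- Inverted error `ε_t(θ) = σ⁻¹(X_t + Σ_{j≥1} (∏_{i=1}^j A_{t−i}(θ)) X_{t−j})`, written as
`σ⁻¹ Σ_{j≥0} (∏_{i=1}^j A_{t−i}(θ)) X_{t−j}` (the `j = 0` term is `X_t`), `σ = √(σ²)`. -/
noncomputable def tmaEps {Ω : Type*} (X : ℤ → Ω → ℝ) (u : ℝ) (θ : ℝ × ℝ × ℝ)
    (t : ℤ) (ω : Ω) : ℝ :=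
  (Real.sqrt θ.2.2)⁻¹ *
    ∑' j : ℕ, (∏ i ∈ Finset.Icc 1 j, tmaA X u θ (t - (i : ℤ)) ω) * X (t - j) ω

/-- Truncated inverted error `ε̃_t(θ)`. -/
noncomputable def tmaEpsT {Ω : Type*} (X : ℤ → Ω → ℝ) (u : ℝ) (θ : ℝ × ℝ × ℝ)
    (t : ℕ) (ω : Ω) : ℝ :=
  (Real.sqrt θ.2.2)⁻¹ *
    ∑ j ∈ Finset.range t, (∏ i ∈ Finset.Icc 1 j, tmaA X u θ ((t : ℤ) - (i : ℤ)) ω) *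
      X ((t : ℤ) - (j : ℤ)) ω

/-- Derivative series `D_t(θ) = ∂ε_t/∂φ(θ)`. -/
noncomputable def tmaD {Ω : Type*} (X : ℤ → Ω → ℝ) (u : ℝ) (θ : ℝ × ℝ × ℝ)
    (t : ℤ) (ω : Ω) : ℝ :=
  -(Real.sqrt θ.2.2)⁻¹ *
    ∑' j : ℕ, ∑ k ∈ Finset.Icc 1 j,
      (∏ i ∈ (Finset.Icc 1 j).erase k, tmaA X u θ (t - (i : ℤ)) ω) * X (t - j) ω

/-- Truncated derivative series `D̃_t(θ)`. -/
noncomputable def tmaDT {Ω : Type*} (X : ℤ → Ω → ℝ) (u : ℝ) (θ : ℝ × ℝ × ℝ)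
    (t : ℕ) (ω : Ω) : ℝ :=
  -(Real.sqrt θ.2.2)⁻¹ *
    ∑ j ∈ Finset.range t, ∑ k ∈ Finset.Icc 1 j,
      (∏ i ∈ (Finset.Icc 1 j).erase k, tmaA X u θ ((t : ℤ) - (i : ℤ)) ω) *
        X ((t : ℤ) - (j : ℤ)) ω


open Filter ENNReal

namespace TmaAux

lemma gauss_abs_moment : ∫⁻ x, ENNReal.ofReal |x| ∂(gaussianReal 0 1) < ⊤ := by
  rw [gaussianReal_of_var_ne_zero 0 one_ne_zero]
  rw [lintegral_withDensity_eq_lintegral_mul _ (measurable_gaussianPDF 0 1)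
    (measurable_abs.ennreal_ofReal)]
  have hint : Integrable (fun x : ℝ => gaussianPDFReal 0 1 x * |x|) := by
    have h := (integrable_mul_exp_neg_mul_sq (b := (2:ℝ)⁻¹) (by norm_num)).abs
    have h2 : Integrable (fun x : ℝ => |x| * Real.exp (-(2⁻¹ : ℝ) * x ^ 2)) := by
      refine h.congr (Eventually.of_forall fun x => ?_)
      simp only []
      rw [show |x * Real.exp (-(2⁻¹:ℝ) * x ^ 2)| = |x| * Real.exp (-(2⁻¹:ℝ) * x ^ 2) from by
        rw [abs_mul, abs_of_pos (Real.exp_pos _)]]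
    unfold gaussianPDFReal
    simp only [NNReal.coe_one, mul_one, sub_zero]
    have h3 := h2.const_mul (Real.sqrt (2 * Real.pi))⁻¹
    refine h3.congr (Eventually.of_forall fun x => ?_)
    ring_nf
  have h4 := hint.lintegral_lt_top
  refine lt_of_eq_of_lt ?_ h4
  refine lintegral_congr fun x => ?_
  simp only [Pi.mul_apply, gaussianPDF]
  rw [← ENNReal.ofReal_mul (gaussianPDFReal_nonneg _ _ _)]

lemma ofReal_abs_tsum_le {f : ℕ → ℝ} (hf : Summable fun n => |f n|) :
    ENNReal.ofReal |∑' n, f n| ≤ ∑' n, ENNReal.ofReal |f n| := by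
  rw [← ENNReal.ofReal_tsum_of_nonneg (fun n => abs_nonneg _) hf]
  exact ENNReal.ofReal_le_ofReal (by simpa using norm_tsum_le_tsum_norm (f := f) (by simpa using hf))

lemma tsum_ofReal_le {f : ℕ → ℝ} {g : ℕ → ENNReal} (hf : Summable fun n => |f n|)
    (h : ∀ n, ENNReal.ofReal |f n| ≤ g n) :
    ENNReal.ofReal |∑' n, f n| ≤ ∑' n, g n :=
  (ofReal_abs_tsum_le hf).trans (ENNReal.tsum_le_tsum h)

lemma ofReal_coeff (n : ℕ) (r x : ℝ) (hr : 0 ≤ r) :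
    ENNReal.ofReal (((n:ℝ)+1) * r^n * |x|)
      = ((n:ℝ≥0∞)+1) * ENNReal.ofReal r ^ n * ENNReal.ofReal |x| := by
  rw [ENNReal.ofReal_mul (by positivity), ENNReal.ofReal_mul (by positivity),
    ENNReal.ofReal_pow hr, ENNReal.ofReal_add (by positivity) zero_le_one,
    ENNReal.ofReal_natCast, ENNReal.ofReal_one]

lemma ofReal_coeff2 (n : ℕ) (r : ℝ) (hr : 0 ≤ r) :
    ENNReal.ofReal (((n:ℝ)+2) * r^n) = ((n:ℝ≥0∞)+2) * ENNReal.ofReal r ^ n := by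
  rw [ENNReal.ofReal_mul (by positivity), ENNReal.ofReal_pow hr,
    ENNReal.ofReal_add (by positivity) (by norm_num), ENNReal.ofReal_natCast]
  norm_num

lemma abs_tmaA_le {Ω : Type*} (X : ℤ → Ω → ℝ) (u c₁ c₂ c₃ : ℝ) {θ : ℝ × ℝ × ℝ}
    (hθ : θ ∈ tmaTheta c₁ c₂ c₃) (t : ℤ) (ω : Ω) : |tmaA X u θ t ω| ≤ c₁ := by
  unfold tmaA
  rw [abs_neg]
  by_cases h : X t ω ≤ u <;> simp [h]
  · exact hθ.2.1
  · exact hθ.1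

/-- coefficient series is summable (in `ℝ≥0∞` it is finite) -/
lemma coeff_sum_lt_top {r : ℝ} (hr0 : 0 ≤ r) (hr1 : r < 1) :
    (∑' n : ℕ, ((n:ℝ≥0∞)+2) * ENNReal.ofReal r ^ n) < ⊤ := by
  have hs : Summable (fun n : ℕ => ((n:ℝ)+2) * r^n) := by
    have h1 : Summable (fun n : ℕ => (n:ℝ)^1 * r^n) :=
      summable_pow_mul_geometric_of_norm_lt_one 1 (by rwa [Real.norm_eq_abs, abs_of_nonneg hr0])
    have h2 : Summable (fun n : ℕ => 2 * r^n) :=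
      (summable_geometric_of_lt_one hr0 hr1).mul_left 2
    refine (h1.add h2).congr fun n => ?_
    ring
  calc (∑' n : ℕ, ((n:ℝ≥0∞)+2) * ENNReal.ofReal r ^ n)
      = ENNReal.ofReal (∑' n : ℕ, ((n:ℝ)+2) * r^n) := by
        rw [ENNReal.ofReal_tsum_of_nonneg (fun n => by positivity) hs]
        exact tsum_congr fun n => (ofReal_coeff2 n r hr0).symm
    _ < ⊤ := ENNReal.ofReal_lt_top


set_option maxHeartbeats 2000000 in
lemma key {Ω : Type*} (X : ℤ → Ω → ℝ) (u c₁ c₂ c₃ : ℝ) (hc₁ : 0 < c₁) (hc₂ : 0 < c₂)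
    {θ : ℝ × ℝ × ℝ} (hθ : θ ∈ tmaTheta c₁ c₂ c₃) (ω : Ω) (t : ℕ)
    (hfin : (∑' j : ℕ, ((j : ℝ≥0∞) + 1) * ENNReal.ofReal c₁ ^ j *
      ENNReal.ofReal |X ((t : ℤ) + 1 - (j : ℤ)) ω|) ≠ ⊤) :
    ENNReal.ofReal |tmaEps X u θ ((t : ℤ) + 1) ω * tmaD X u θ ((t : ℤ) + 1) ω
        - tmaEpsT X u θ (t + 1) ω * tmaDT X u θ (t + 1) ω| ≤
      2 * ENNReal.ofReal (Real.sqrt c₂)⁻¹ ^ 2 * ENNReal.ofReal c₁⁻¹ *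
        (((t : ℝ≥0∞) + 2) * ENNReal.ofReal c₁ ^ (t + 1) *
          (∑' j : ℕ, ((j : ℝ≥0∞) + 1) * ENNReal.ofReal c₁ ^ j *
            ENNReal.ofReal |X ((t : ℤ) + 1 - (j : ℤ)) ω|)) *
        (∑' j : ℕ, ((j : ℝ≥0∞) + 1) * ENNReal.ofReal c₁ ^ j *
          ENNReal.ofReal |X (-(j : ℤ)) ω|) := by
  obtain ⟨hφ, hφξ, hs2, hs3⟩ := hθ
  set R := ENNReal.ofReal c₁ with hRdef
  set Q := ENNReal.ofReal (Real.sqrt c₂)⁻¹ with hQdef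
  set Rinv := ENNReal.ofReal c₁⁻¹ with hRinvdef
  set q := (Real.sqrt θ.2.2)⁻¹ with hqdef
  have hq0 : 0 ≤ q := inv_nonneg.2 (Real.sqrt_nonneg _)
  have hqQ : ENNReal.ofReal q ≤ Q := by
    refine ENNReal.ofReal_le_ofReal ?_
    exact inv_anti₀ (Real.sqrt_pos.2 hc₂) (Real.sqrt_le_sqrt hs2)
  -- the sequences
  set x : ℕ → ℝ := fun j => X ((t : ℤ) + 1 - (j : ℤ)) ω with hxdef
  set a : ℕ → ℝ := fun j =>
    (∏ i ∈ Finset.Icc 1 j, tmaA X u θ ((t : ℤ) + 1 - (i : ℤ)) ω) * x j with hadef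
  set b : ℕ → ℝ := fun j => ∑ k ∈ Finset.Icc 1 j,
    (∏ i ∈ (Finset.Icc 1 j).erase k, tmaA X u θ ((t : ℤ) + 1 - (i : ℤ)) ω) * x j with hbdef
  set g : ℕ → ℝ := fun j => ((j : ℝ) + 1) * c₁ ^ j * |x j| with hgdef
  have hg0 : ∀ j, 0 ≤ g j := fun j => by positivity
  have hA : ∀ i : ℤ, |tmaA X u θ i ω| ≤ c₁ := fun i =>
    abs_tmaA_le X u c₁ c₂ c₃ ⟨hφ, hφξ, hs2, hs3⟩ i ω
  have hprod : ∀ (s : Finset ℕ), |∏ i ∈ s, tmaA X u θ ((t : ℤ) + 1 - (i : ℤ)) ω| ≤ c₁ ^ s.card := by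
    intro s
    rw [Finset.abs_prod]
    calc ∏ i ∈ s, |tmaA X u θ ((t : ℤ) + 1 - (i : ℤ)) ω| ≤ ∏ _i ∈ s, c₁ :=
          Finset.prod_le_prod (fun i _ => abs_nonneg _) (fun i _ => hA _)
      _ = c₁ ^ s.card := Finset.prod_const c₁
  have ha_abs : ∀ j, |a j| ≤ c₁ ^ j * |x j| := by
    intro j
    rw [hadef, abs_mul]
    have := hprod (Finset.Icc 1 j)
    rw [Nat.card_Icc] at this
    simpa using mul_le_mul_of_nonneg_right this (abs_nonneg (x j))
  have ha_g : ∀ j, |a j| ≤ g j := by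
    intro j
    refine (ha_abs j).trans ?_
    rw [hgdef]
    have h0 : 0 ≤ c₁ ^ j * |x j| := by positivity
    have h1 : (1:ℝ) ≤ (j:ℝ) + 1 := by
      have : (0:ℝ) ≤ (j:ℝ) := Nat.cast_nonneg j
      linarith
    calc c₁ ^ j * |x j| = 1 * (c₁ ^ j * |x j|) := (one_mul _).symm
      _ ≤ ((j:ℝ) + 1) * (c₁ ^ j * |x j|) := mul_le_mul_of_nonneg_right h1 h0
      _ = ((j:ℝ) + 1) * c₁ ^ j * |x j| := by ring
  have hb_abs : ∀ j, |b j| ≤ c₁⁻¹ * g j := by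
    intro j
    rw [hbdef]
    calc |∑ k ∈ Finset.Icc 1 j,
          (∏ i ∈ (Finset.Icc 1 j).erase k, tmaA X u θ ((t : ℤ) + 1 - (i : ℤ)) ω) * x j|
        ≤ ∑ k ∈ Finset.Icc 1 j,
          |(∏ i ∈ (Finset.Icc 1 j).erase k, tmaA X u θ ((t : ℤ) + 1 - (i : ℤ)) ω) * x j| :=
          Finset.abs_sum_le_sum_abs _ _
      _ ≤ ∑ k ∈ Finset.Icc 1 j, c₁⁻¹ * (c₁ ^ j * |x j|) := by
          refine Finset.sum_le_sum fun k hk => ?_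
          rw [abs_mul]
          have hk1 : 1 ≤ k := (Finset.mem_Icc.1 hk).1
          have hkj : k ≤ j := (Finset.mem_Icc.1 hk).2
          have hcard : ((Finset.Icc 1 j).erase k).card = j - 1 := by
            rw [Finset.card_erase_of_mem hk, Nat.card_Icc]; omega
          have hp := hprod ((Finset.Icc 1 j).erase k)
          rw [hcard] at hp
          have hj1 : 1 ≤ j := le_trans hk1 hkj
          have hpow : c₁ ^ (j - 1) = c₁⁻¹ * c₁ ^ j := by
            rw [eq_inv_mul_iff_mul_eq₀ hc₁.ne', ← pow_succ']
            congr 1; omega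
          rw [hpow] at hp
          calc |∏ i ∈ (Finset.Icc 1 j).erase k, tmaA X u θ ((t : ℤ) + 1 - (i : ℤ)) ω| * |x j|
              ≤ (c₁⁻¹ * c₁ ^ j) * |x j| := mul_le_mul_of_nonneg_right hp (abs_nonneg _)
            _ = c₁⁻¹ * (c₁ ^ j * |x j|) := by ring
      _ = (j : ℝ) * (c₁⁻¹ * (c₁ ^ j * |x j|)) := by
          rw [Finset.sum_const, Nat.card_Icc]; simp [nsmul_eq_mul]
      _ ≤ c₁⁻¹ * g j := by
          rw [hgdef]
          have h0 : 0 ≤ c₁⁻¹ * (c₁ ^ j * |x j|) := by positivity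
          have h1 : (j:ℝ) ≤ (j:ℝ) + 1 := by linarith
          calc (j:ℝ) * (c₁⁻¹ * (c₁ ^ j * |x j|))
              ≤ ((j:ℝ) + 1) * (c₁⁻¹ * (c₁ ^ j * |x j|)) := mul_le_mul_of_nonneg_right h1 h0
            _ = c₁⁻¹ * (((j:ℝ) + 1) * c₁ ^ j * |x j|) := by ring
  -- summability
  have hofg : ∀ j, ENNReal.ofReal (g j) = ((j : ℝ≥0∞) + 1) * R ^ j * ENNReal.ofReal |x j| :=
    fun j => ofReal_coeff j c₁ (x j) hc₁.le
  have hg_sum : Summable g := by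
    have h1 := ENNReal.summable_toReal hfin
    refine h1.congr fun j => ?_
    rw [← hofg j, ENNReal.toReal_ofReal (hg0 j)]
  have ha_sum_abs : Summable (fun j => |a j|) :=
    Summable.of_nonneg_of_le (fun j => abs_nonneg _) ha_g hg_sum
  have ha_sum : Summable a := summable_abs_iff.1 ha_sum_abs
  have hb_sum_abs : Summable (fun j => |b j|) :=
    Summable.of_nonneg_of_le (fun j => abs_nonneg _) hb_abs (hg_sum.mul_left c₁⁻¹)
  have hb_sum : Summable b := summable_abs_iff.1 hb_sum_abs
  -- identify the four quantities
  have hcast : (((t + 1 : ℕ)) : ℤ) = (t : ℤ) + 1 := by push_cast; ring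
  have heps : tmaEps X u θ ((t : ℤ) + 1) ω = q * ∑' j, a j := by
    simp only [tmaEps, hadef, hxdef, hqdef]
  have hepsT : tmaEpsT X u θ (t + 1) ω = q * ∑ j ∈ Finset.range (t + 1), a j := by
    unfold tmaEpsT
    rw [hcast]
  have hD : tmaD X u θ ((t : ℤ) + 1) ω = -q * ∑' j, b j := by
    simp only [tmaD, hbdef, hxdef, hqdef]
  have hDT : tmaDT X u θ (t + 1) ω = -q * ∑ j ∈ Finset.range (t + 1), b j := by
    unfold tmaDT
    rw [hcast]
  -- tails
  have htail_a : (∑' j, a j) - ∑ j ∈ Finset.range (t + 1), a j = ∑' j, a (j + (t + 1)) := by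
    rw [← ha_sum.sum_add_tsum_nat_add (t + 1)]; ring
  have htail_b : (∑' j, b j) - ∑ j ∈ Finset.range (t + 1), b j = ∑' j, b (j + (t + 1)) := by
    rw [← hb_sum.sum_add_tsum_nat_add (t + 1)]; ring
  have ha_tail_sum : Summable (fun j => |a (j + (t + 1))|) :=
    (summable_nat_add_iff (t + 1)).2 ha_sum_abs
  have hb_tail_sum : Summable (fun j => |b (j + (t + 1))|) :=
    (summable_nat_add_iff (t + 1)).2 hb_sum_abs
  -- the ENNReal quantities
  set F := ∑' j : ℕ, ((j : ℝ≥0∞) + 1) * R ^ j * ENNReal.ofReal |x j| with hFdef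
  set K := ∑' j : ℕ, ((j : ℝ≥0∞) + 1) * R ^ j * ENNReal.ofReal |X (-(j : ℤ)) ω| with hKdef
  have hxneg : ∀ j : ℕ, x (j + (t + 1)) = X (-(j : ℤ)) ω := by
    intro j
    rw [hxdef]
    congr 1
    push_cast
    ring
  -- bound B1
  have hB1 : ENNReal.ofReal |tmaEps X u θ ((t : ℤ) + 1) ω - tmaEpsT X u θ (t + 1) ω|
      ≤ Q * (R ^ (t + 1) * K) := by
    rw [heps, hepsT, ← mul_sub, abs_mul, abs_of_nonneg hq0,
      ENNReal.ofReal_mul hq0, htail_a]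
    refine mul_le_mul' hqQ ?_
    refine (tsum_ofReal_le ha_tail_sum (g := fun j =>
      R ^ (t + 1) * (((j : ℝ≥0∞) + 1) * R ^ j * ENNReal.ofReal |X (-(j : ℤ)) ω|)) ?_).trans ?_
    · intro j
      have h1 : |a (j + (t + 1))| ≤ c₁ ^ (j + (t + 1)) * |x (j + (t + 1))| := ha_abs _
      refine (ENNReal.ofReal_le_ofReal h1).trans ?_
      rw [ENNReal.ofReal_mul (by positivity), ENNReal.ofReal_pow hc₁.le, hxneg j]
      rw [pow_add]
      calc R ^ j * R ^ (t + 1) * ENNReal.ofReal |X (-(j : ℤ)) ω|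
          = R ^ (t + 1) * (R ^ j * ENNReal.ofReal |X (-(j : ℤ)) ω|) := by ring
        _ ≤ R ^ (t + 1) * (((j : ℝ≥0∞) + 1) * R ^ j * ENNReal.ofReal |X (-(j : ℤ)) ω|) := by
            rw [mul_assoc ((j : ℝ≥0∞) + 1)]
            exact mul_le_mul' le_rfl (le_mul_of_one_le_left zero_le (by simp))
    · rw [ENNReal.tsum_mul_left]
  -- bound B2
  have hB2 : ENNReal.ofReal |tmaD X u θ ((t : ℤ) + 1) ω| ≤ Q * (Rinv * F) := by
    rw [hD, abs_mul, abs_neg, abs_of_nonneg hq0, ENNReal.ofReal_mul hq0]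
    refine mul_le_mul' hqQ ?_
    refine (tsum_ofReal_le hb_sum_abs (g := fun j =>
      Rinv * (((j : ℝ≥0∞) + 1) * R ^ j * ENNReal.ofReal |x j|)) ?_).trans ?_
    · intro j
      refine (ENNReal.ofReal_le_ofReal (hb_abs j)).trans ?_
      rw [ENNReal.ofReal_mul (inv_nonneg.2 hc₁.le), hofg j]
    · rw [ENNReal.tsum_mul_left]
  -- bound B3
  have hB3 : ENNReal.ofReal |tmaEpsT X u θ (t + 1) ω| ≤ Q * F := by
    rw [hepsT, abs_mul, abs_of_nonneg hq0, ENNReal.ofReal_mul hq0]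
    refine mul_le_mul' hqQ ?_
    calc ENNReal.ofReal |∑ j ∈ Finset.range (t + 1), a j|
        ≤ ENNReal.ofReal (∑ j ∈ Finset.range (t + 1), |a j|) :=
          ENNReal.ofReal_le_ofReal (Finset.abs_sum_le_sum_abs _ _)
      _ = ∑ j ∈ Finset.range (t + 1), ENNReal.ofReal |a j| :=
          ENNReal.ofReal_sum_of_nonneg fun i _ => abs_nonneg _
      _ ≤ ∑ j ∈ Finset.range (t + 1), ((j : ℝ≥0∞) + 1) * R ^ j * ENNReal.ofReal |x j| := by
          refine Finset.sum_le_sum fun j _ => ?_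
          rw [← hofg j]
          exact ENNReal.ofReal_le_ofReal (ha_g j)
      _ ≤ F := ENNReal.sum_le_tsum _
  -- bound B4
  have hB4 : ENNReal.ofReal |tmaD X u θ ((t : ℤ) + 1) ω - tmaDT X u θ (t + 1) ω|
      ≤ Q * (Rinv * (((t : ℝ≥0∞) + 2) * R ^ (t + 1) * K)) := by
    rw [hD, hDT, ← mul_sub, abs_mul, abs_neg, abs_of_nonneg hq0,
      ENNReal.ofReal_mul hq0, htail_b]
    refine mul_le_mul' hqQ ?_
    refine (tsum_ofReal_le hb_tail_sum (g := fun j =>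
      Rinv * (((t : ℝ≥0∞) + 2) * R ^ (t + 1) *
        (((j : ℝ≥0∞) + 1) * R ^ j * ENNReal.ofReal |X (-(j : ℤ)) ω|))) ?_).trans ?_
    · intro j
      refine (ENNReal.ofReal_le_ofReal (hb_abs (j + (t + 1)))).trans ?_
      rw [ENNReal.ofReal_mul (inv_nonneg.2 hc₁.le), hofg (j + (t + 1))]
      refine mul_le_mul' le_rfl ?_
      rw [hxneg j]
      have hn : (j + (t + 1) + 1 : ℕ) ≤ (j + 1) * (t + 2) := by nlinarith
      have hnat : ((j + (t + 1) : ℕ) : ℝ≥0∞) + 1 ≤ ((j : ℝ≥0∞) + 1) * ((t : ℝ≥0∞) + 2) := by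
        calc ((j + (t + 1) : ℕ) : ℝ≥0∞) + 1 = ((j + (t + 1) + 1 : ℕ) : ℝ≥0∞) := by push_cast; ring
          _ ≤ (((j + 1) * (t + 2) : ℕ) : ℝ≥0∞) := by exact_mod_cast hn
          _ = ((j : ℝ≥0∞) + 1) * ((t : ℝ≥0∞) + 2) := by push_cast; ring
      calc (((j + (t + 1) : ℕ) : ℝ≥0∞) + 1) * R ^ (j + (t + 1)) * ENNReal.ofReal |X (-(j : ℤ)) ω|
          ≤ (((j : ℝ≥0∞) + 1) * ((t : ℝ≥0∞) + 2)) * R ^ (j + (t + 1)) *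
              ENNReal.ofReal |X (-(j : ℤ)) ω| := by gcongr
        _ = ((t : ℝ≥0∞) + 2) * R ^ (t + 1) *
              (((j : ℝ≥0∞) + 1) * R ^ j * ENNReal.ofReal |X (-(j : ℤ)) ω|) := by
            rw [pow_add]; ring
    · rw [ENNReal.tsum_mul_left, ENNReal.tsum_mul_left]
  -- combine
  have hiden : tmaEps X u θ ((t : ℤ) + 1) ω * tmaD X u θ ((t : ℤ) + 1) ω
      - tmaEpsT X u θ (t + 1) ω * tmaDT X u θ (t + 1) ω
      = (tmaEps X u θ ((t : ℤ) + 1) ω - tmaEpsT X u θ (t + 1) ω) * tmaD X u θ ((t : ℤ) + 1) ω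
        + tmaEpsT X u θ (t + 1) ω * (tmaD X u θ ((t : ℤ) + 1) ω - tmaDT X u θ (t + 1) ω) := by
    ring
  calc ENNReal.ofReal |tmaEps X u θ ((t : ℤ) + 1) ω * tmaD X u θ ((t : ℤ) + 1) ω
        - tmaEpsT X u θ (t + 1) ω * tmaDT X u θ (t + 1) ω|
      ≤ ENNReal.ofReal (|(tmaEps X u θ ((t : ℤ) + 1) ω - tmaEpsT X u θ (t + 1) ω)
          * tmaD X u θ ((t : ℤ) + 1) ω|
        + |tmaEpsT X u θ (t + 1) ω * (tmaD X u θ ((t : ℤ) + 1) ω - tmaDT X u θ (t + 1) ω)|) := by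
        rw [hiden]
        exact ENNReal.ofReal_le_ofReal (abs_add_le _ _)
    _ ≤ ENNReal.ofReal |(tmaEps X u θ ((t : ℤ) + 1) ω - tmaEpsT X u θ (t + 1) ω)
          * tmaD X u θ ((t : ℤ) + 1) ω|
        + ENNReal.ofReal |tmaEpsT X u θ (t + 1) ω
          * (tmaD X u θ ((t : ℤ) + 1) ω - tmaDT X u θ (t + 1) ω)| := ENNReal.ofReal_add_le
    _ = ENNReal.ofReal |tmaEps X u θ ((t : ℤ) + 1) ω - tmaEpsT X u θ (t + 1) ω|
          * ENNReal.ofReal |tmaD X u θ ((t : ℤ) + 1) ω|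
        + ENNReal.ofReal |tmaEpsT X u θ (t + 1) ω|
          * ENNReal.ofReal |tmaD X u θ ((t : ℤ) + 1) ω - tmaDT X u θ (t + 1) ω| := by
        rw [abs_mul, abs_mul, ENNReal.ofReal_mul (abs_nonneg _), ENNReal.ofReal_mul (abs_nonneg _)]
    _ ≤ (Q * (R ^ (t + 1) * K)) * (Q * (Rinv * F))
        + (Q * F) * (Q * (Rinv * (((t : ℝ≥0∞) + 2) * R ^ (t + 1) * K))) := by
        exact add_le_add (mul_le_mul' hB1 hB2) (mul_le_mul' hB3 hB4)
    _ ≤ 2 * Q ^ 2 * Rinv * (((t : ℝ≥0∞) + 2) * R ^ (t + 1) * F) * K := by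
        have h1 : (Q * (R ^ (t + 1) * K)) * (Q * (Rinv * F))
            ≤ Q ^ 2 * Rinv * (((t : ℝ≥0∞) + 2) * R ^ (t + 1) * F) * K := by
          have : (Q * (R ^ (t + 1) * K)) * (Q * (Rinv * F))
              = Q ^ 2 * Rinv * (1 * R ^ (t + 1) * F) * K := by ring
          rw [this]
          gcongr
          exact one_le_two.trans le_add_self
        have h2 : (Q * F) * (Q * (Rinv * (((t : ℝ≥0∞) + 2) * R ^ (t + 1) * K)))
            = Q ^ 2 * Rinv * (((t : ℝ≥0∞) + 2) * R ^ (t + 1) * F) * K := by ring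
        calc (Q * (R ^ (t + 1) * K)) * (Q * (Rinv * F))
            + (Q * F) * (Q * (Rinv * (((t : ℝ≥0∞) + 2) * R ^ (t + 1) * K)))
            ≤ Q ^ 2 * Rinv * (((t : ℝ≥0∞) + 2) * R ^ (t + 1) * F) * K
              + Q ^ 2 * Rinv * (((t : ℝ≥0∞) + 2) * R ^ (t + 1) * F) * K := by
              rw [h2]; exact add_le_add_left h1 _
          _ = 2 * Q ^ 2 * Rinv * (((t : ℝ≥0∞) + 2) * R ^ (t + 1) * F) * K := by ring

end TmaAux

/-- Lemma A.7, first claim (φ-component): almost surely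
`Σ_{t=1}^∞ sup_{θ∈Θ} |ε_t(θ) D_t(θ) − ε̃_t(θ) D̃_t(θ)| < ∞`, i.e. the differences of the
φ-scores of the exact and approximated Gaussian quasi-log-likelihoods are summable. -/
theorem stmt9 {Ω : Type*} [MeasurableSpace Ω] (P : Measure Ω) [IsProbabilityMeasure P]
    (u c₁ c₂ c₃ : ℝ) (hc₁ : 0 < c₁) (hc₁' : c₁ < 1) (hc₂ : 0 < c₂) (hc₂₃ : c₂ ≤ c₃)
    (φ₀ ξ₀ s₀ : ℝ) (hθ₀ : (φ₀, ξ₀, s₀) ∈ tmaTheta c₁ c₂ c₃)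
    (e X : ℤ → Ω → ℝ) (he : ∀ t, Measurable (e t)) (hX : ∀ t, Measurable (X t))
    (heG : ∀ t, P.map (e t) = gaussianReal 0 1)
    (hmodel : ∀ᵐ ω ∂P, ∀ t : ℤ, X t ω =
      (φ₀ + ξ₀ * (if X (t - 1) ω ≤ u then 1 else 0)) * Real.sqrt s₀ * e (t - 1) ω
        + Real.sqrt s₀ * e t ω) :
    ∀ᵐ ω ∂P,
      (∑' t : ℕ, ⨆ θ ∈ tmaTheta c₁ c₂ c₃,
        ENNReal.ofReal
          |tmaEps X u θ ((t : ℤ) + 1) ω * tmaD X u θ ((t : ℤ) + 1) ω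
            - tmaEpsT X u θ (t + 1) ω * tmaDT X u θ (t + 1) ω|) < ⊤ := by
  classical
  have hc₃ : 0 < c₃ := lt_of_lt_of_le hc₂ hc₂₃
  set R := ENNReal.ofReal c₁ with hR
  have hR1 : R < 1 := by rw [hR]; exact ENNReal.ofReal_lt_one.2 hc₁'
  have hRne0 : R ≠ 0 := by rw [hR]; exact (ENNReal.ofReal_pos.2 hc₁).ne'
  have hmeas : ∀ s : ℤ, Measurable fun ω => ENNReal.ofReal |X s ω| :=
    fun s => (hX s).abs.ennreal_ofReal
  set m := ∫⁻ x, ENNReal.ofReal |x| ∂(gaussianReal 0 1) with hm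
  have hmfin : m < ⊤ := TmaAux.gauss_abs_moment
  have hes : ∀ s : ℤ, ∫⁻ ω, ENNReal.ofReal |e s ω| ∂P = m := by
    intro s
    rw [hm, ← heG s, lintegral_map measurable_abs.ennreal_ofReal (he s)]
  set M := ENNReal.ofReal (Real.sqrt c₃) * (m + m) with hM
  have hMfin : M < ⊤ :=
    ENNReal.mul_lt_top ENNReal.ofReal_lt_top (ENNReal.add_lt_top.2 ⟨hmfin, hmfin⟩)
  have hXm : ∀ s : ℤ, ∫⁻ ω, ENNReal.ofReal |X s ω| ∂P ≤ M := by
    intro s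
    have hae : ∀ᵐ ω ∂P, ENNReal.ofReal |X s ω| ≤
        ENNReal.ofReal (Real.sqrt c₃) *
          (ENNReal.ofReal |e (s - 1) ω| + ENNReal.ofReal |e s ω|) := by
      filter_upwards [hmodel] with ω hω
      have h := hω s
      have hcoef : |φ₀ + ξ₀ * (if X (s - 1) ω ≤ u then 1 else 0)| ≤ c₁ := by
        by_cases hi : X (s - 1) ω ≤ u <;> simp [hi]
        exacts [hθ₀.2.1, hθ₀.1]
      have hs₀ : Real.sqrt s₀ ≤ Real.sqrt c₃ := Real.sqrt_le_sqrt hθ₀.2.2.2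
      have habs : |X s ω| ≤ Real.sqrt c₃ * |e (s - 1) ω| + Real.sqrt c₃ * |e s ω| := by
        rw [h]
        refine (abs_add_le _ _).trans (add_le_add ?_ ?_)
        · rw [abs_mul, abs_mul, abs_of_nonneg (Real.sqrt_nonneg _)]
          have h1 : |φ₀ + ξ₀ * (if X (s - 1) ω ≤ u then 1 else 0)| * Real.sqrt s₀
              ≤ Real.sqrt c₃ := by
            calc |φ₀ + ξ₀ * (if X (s - 1) ω ≤ u then 1 else 0)| * Real.sqrt s₀
                ≤ 1 * Real.sqrt c₃ :=
                  mul_le_mul (hcoef.trans hc₁'.le) hs₀ (Real.sqrt_nonneg _) zero_le_one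
              _ = Real.sqrt c₃ := one_mul _
          exact mul_le_mul_of_nonneg_right h1 (abs_nonneg _)
        · rw [abs_mul, abs_of_nonneg (Real.sqrt_nonneg _)]
          exact mul_le_mul_of_nonneg_right hs₀ (abs_nonneg _)
      calc ENNReal.ofReal |X s ω|
          ≤ ENNReal.ofReal (Real.sqrt c₃ * |e (s - 1) ω| + Real.sqrt c₃ * |e s ω|) :=
            ENNReal.ofReal_le_ofReal habs
        _ = ENNReal.ofReal (Real.sqrt c₃) *
            (ENNReal.ofReal |e (s - 1) ω| + ENNReal.ofReal |e s ω|) := by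
            rw [ENNReal.ofReal_add (by positivity) (by positivity),
              ENNReal.ofReal_mul (Real.sqrt_nonneg _), ENNReal.ofReal_mul (Real.sqrt_nonneg _),
              mul_add]
    calc ∫⁻ ω, ENNReal.ofReal |X s ω| ∂P
        ≤ ∫⁻ ω, ENNReal.ofReal (Real.sqrt c₃) *
            (ENNReal.ofReal |e (s - 1) ω| + ENNReal.ofReal |e s ω|) ∂P :=
          lintegral_mono_ae hae
      _ = ENNReal.ofReal (Real.sqrt c₃) *
          ((∫⁻ ω, ENNReal.ofReal |e (s - 1) ω| ∂P) + ∫⁻ ω, ENNReal.ofReal |e s ω| ∂P) := by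
          rw [lintegral_const_mul' _ _ ENNReal.ofReal_ne_top,
            lintegral_add_left ((he _).abs.ennreal_ofReal)]
      _ = M := by rw [hes, hes, hM]
  set SC := ∑' n : ℕ, ((n : ℝ≥0∞) + 2) * R ^ n with hSC
  have hSCfin : SC < ⊤ := TmaAux.coeff_sum_lt_top hc₁.le hc₁'
  set F : ℕ → Ω → ℝ≥0∞ := fun t ω => ∑' j : ℕ,
    ((j : ℝ≥0∞) + 1) * R ^ j * ENNReal.ofReal |X ((t : ℤ) + 1 - (j : ℤ)) ω| with hF
  set K : Ω → ℝ≥0∞ := fun ω => ∑' j : ℕ,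
    ((j : ℝ≥0∞) + 1) * R ^ j * ENNReal.ofReal |X (-(j : ℤ)) ω| with hK
  set G : Ω → ℝ≥0∞ := fun ω => ∑' t : ℕ, ((t : ℝ≥0∞) + 2) * R ^ (t + 1) * F t ω with hG
  have hFmeas : ∀ t, Measurable (F t) := fun t =>
    Measurable.ennreal_tsum fun j => (hmeas _).const_mul _
  have hKmeas : Measurable K := Measurable.ennreal_tsum fun j => (hmeas _).const_mul _
  have hGmeas : Measurable G := Measurable.ennreal_tsum fun t => (hFmeas t).const_mul _
  have hFint : ∀ t, ∫⁻ ω, F t ω ∂P ≤ SC * M := by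
    intro t
    rw [hF]
    rw [lintegral_tsum fun j => ((hmeas _).const_mul _).aemeasurable]
    calc ∑' j : ℕ, ∫⁻ ω, ((j : ℝ≥0∞) + 1) * R ^ j *
          ENNReal.ofReal |X ((t : ℤ) + 1 - (j : ℤ)) ω| ∂P
        = ∑' j : ℕ, ((j : ℝ≥0∞) + 1) * R ^ j *
            ∫⁻ ω, ENNReal.ofReal |X ((t : ℤ) + 1 - (j : ℤ)) ω| ∂P :=
          tsum_congr fun j => lintegral_const_mul _ (hmeas _)
      _ ≤ ∑' j : ℕ, ((j : ℝ≥0∞) + 2) * R ^ j * M := by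
          refine ENNReal.tsum_le_tsum fun j => ?_
          exact mul_le_mul' (mul_le_mul' (add_le_add le_rfl one_le_two) le_rfl) (hXm _)
      _ = SC * M := by rw [hSC]; exact ENNReal.tsum_mul_right
  have hKint : ∫⁻ ω, K ω ∂P ≤ SC * M := by
    rw [hK]
    rw [lintegral_tsum fun j => ((hmeas _).const_mul _).aemeasurable]
    calc ∑' j : ℕ, ∫⁻ ω, ((j : ℝ≥0∞) + 1) * R ^ j * ENNReal.ofReal |X (-(j : ℤ)) ω| ∂P
        = ∑' j : ℕ, ((j : ℝ≥0∞) + 1) * R ^ j * ∫⁻ ω, ENNReal.ofReal |X (-(j : ℤ)) ω| ∂P :=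
          tsum_congr fun j => lintegral_const_mul _ (hmeas _)
      _ ≤ ∑' j : ℕ, ((j : ℝ≥0∞) + 2) * R ^ j * M := by
          refine ENNReal.tsum_le_tsum fun j => ?_
          exact mul_le_mul' (mul_le_mul' (add_le_add le_rfl one_le_two) le_rfl) (hXm _)
      _ = SC * M := by rw [hSC]; exact ENNReal.tsum_mul_right
  have hGint : ∫⁻ ω, G ω ∂P ≤ SC * (SC * M) := by
    rw [hG]
    rw [lintegral_tsum fun t => ((hFmeas t).const_mul _).aemeasurable]
    calc ∑' t : ℕ, ∫⁻ ω, ((t : ℝ≥0∞) + 2) * R ^ (t + 1) * F t ω ∂P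
        = ∑' t : ℕ, ((t : ℝ≥0∞) + 2) * R ^ (t + 1) * ∫⁻ ω, F t ω ∂P :=
          tsum_congr fun t => lintegral_const_mul _ (hFmeas t)
      _ ≤ ∑' t : ℕ, ((t : ℝ≥0∞) + 2) * R ^ t * (SC * M) := by
          refine ENNReal.tsum_le_tsum fun t => ?_
          refine mul_le_mul' (mul_le_mul' le_rfl ?_) (hFint t)
          calc R ^ (t + 1) = R ^ t * R := pow_succ R t
            _ ≤ R ^ t * 1 := mul_le_mul' le_rfl hR1.le
            _ = R ^ t := mul_one _
      _ = SC * (SC * M) := by rw [hSC]; exact ENNReal.tsum_mul_right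
  have hKae : ∀ᵐ ω ∂P, K ω < ⊤ :=
    ae_lt_top hKmeas (lt_of_le_of_lt hKint (ENNReal.mul_lt_top hSCfin hMfin)).ne
  have hGae : ∀ᵐ ω ∂P, G ω < ⊤ :=
    ae_lt_top hGmeas
      (lt_of_le_of_lt hGint (ENNReal.mul_lt_top hSCfin (ENNReal.mul_lt_top hSCfin hMfin))).ne
  filter_upwards [hKae, hGae] with ω hKω hGω
  have hfin : ∀ t : ℕ, F t ω ≠ ⊤ := by
    intro t htop
    have hle : ((t : ℝ≥0∞) + 2) * R ^ (t + 1) * F t ω ≤ G ω := by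
      rw [hG]; exact ENNReal.le_tsum t
    have hc0 : ((t : ℝ≥0∞) + 2) * R ^ (t + 1) ≠ 0 :=
      mul_ne_zero (by simp) (pow_ne_zero _ hRne0)
    rw [htop, ENNReal.mul_top hc0] at hle
    exact hGω.ne (top_le_iff.1 hle)
  set C := 2 * ENNReal.ofReal (Real.sqrt c₂)⁻¹ ^ 2 * ENNReal.ofReal c₁⁻¹ with hC
  have hCfin : C < ⊤ := by
    rw [hC]
    exact ENNReal.mul_lt_top
      (ENNReal.mul_lt_top (by norm_num) (ENNReal.pow_lt_top ENNReal.ofReal_lt_top))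
      ENNReal.ofReal_lt_top
  calc (∑' t : ℕ, ⨆ θ ∈ tmaTheta c₁ c₂ c₃,
        ENNReal.ofReal
          |tmaEps X u θ ((t : ℤ) + 1) ω * tmaD X u θ ((t : ℤ) + 1) ω
            - tmaEpsT X u θ (t + 1) ω * tmaDT X u θ (t + 1) ω|)
      ≤ ∑' t : ℕ, C * (((t : ℝ≥0∞) + 2) * R ^ (t + 1) * F t ω) * K ω := by
        refine ENNReal.tsum_le_tsum fun t => ?_
        refine iSup₂_le fun θ hθ => ?_
        exact TmaAux.key X u c₁ c₂ c₃ hc₁ hc₂ hθ ω t (hfin t)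
    _ = ∑' t : ℕ, (C * K ω) * (((t : ℝ≥0∞) + 2) * R ^ (t + 1) * F t ω) :=
        tsum_congr fun t => by ring
    _ = (C * K ω) * G ω := by rw [ENNReal.tsum_mul_left, hG]
    _ < ⊤ := ENNReal.mul_lt_top (ENNReal.mul_lt_top hCfin hKω) hGω
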